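/- Let μ > 0, ν > 0 and 0 < p < 1 be real numbers, and for natural numbers y define a_y := μ^(νy) / ((1−p)^y · (y!)^ν). Then for every natural number y, a_y ≤ a_{y_m}, where y_m := ⌊μ/(1−p)^(1/ν)⌋, i.e. the sequence (a_y) attains its maximum over the natural numbers at y_m. -/

import Mathlib

/-- For `μ > 0`, `ν > 0`, `0 < p < 1` and
`a_y := μ^(νy) / ((1−p)^y · (y!)^ν)`, the sequence `(a_y)` attains its maximum over ℕ
at `y_m := ⌊μ/(1−p)^(1/ν)⌋`. -/
theorem stmt_5 (μ ν p : ℝ) (hμ : 0 < μ) (hν : 0 < ν) (hp0 : 0 < p) (hp1 : p < 1)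
    (a : ℕ → ℝ)
    (ha : ∀ y : ℕ, a y = μ ^ (ν * (y : ℝ)) / ((1 - p) ^ y * (Nat.factorial y : ℝ) ^ ν))
    (y : ℕ) :
    a y ≤ a ⌊μ / (1 - p) ^ (1 / ν)⌋₊ := by
  have hq : 0 < 1 - p := by linarith
  set r : ℝ := μ / (1 - p) ^ (1 / ν) with hr
  have hrpos : 0 < r := div_pos hμ (Real.rpow_pos_of_pos hq _)
  set m : ℕ := ⌊r⌋₊ with hm
  have hapos : ∀ n : ℕ, 0 < a n := by
    intro n
    rw [ha]
    have h1 : 0 < μ ^ (ν * (n : ℝ)) := Real.rpow_pos_of_pos hμ _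
    have h2 : 0 < (1 - p) ^ n := pow_pos hq n
    have h3 : 0 < ((Nat.factorial n : ℝ)) ^ ν :=
      Real.rpow_pos_of_pos (by exact_mod_cast Nat.factorial_pos n) _
    positivity
  have hμν : μ ^ ν = (1 - p) * r ^ ν := by
    have hμeq : μ = r * (1 - p) ^ (1 / ν) := by
      rw [hr, div_mul_cancel₀ _ (Real.rpow_pos_of_pos hq _).ne']
    rw [hμeq, Real.mul_rpow hrpos.le (Real.rpow_pos_of_pos hq _).le,
      ← Real.rpow_mul hq.le, one_div_mul_cancel hν.ne', Real.rpow_one]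
    ring
  have key : ∀ n : ℕ, a (n + 1) * ((1 - p) * ((n : ℝ) + 1) ^ ν) = a n * ((1 - p) * r ^ ν) := by
    intro n
    rw [← hμν, ha, ha, Nat.factorial_succ, Nat.cast_mul, Nat.cast_add, Nat.cast_one,
      Real.mul_rpow (by positivity) (by positivity), pow_succ]
    have h1 : ν * ((n : ℝ) + 1) = ν * n + ν := by ring
    rw [h1, Real.rpow_add hμ]
    have h2 : ((1 - p) : ℝ) ^ n ≠ 0 := (pow_pos hq n).ne'
    have h3 : ((Nat.factorial n : ℝ)) ^ ν ≠ 0 :=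
      (Real.rpow_pos_of_pos (by exact_mod_cast Nat.factorial_pos n) _).ne'
    have h4 : ((n : ℝ) + 1) ^ ν ≠ 0 := (Real.rpow_pos_of_pos (by positivity) _).ne'
    field_simp
  have step_inc : ∀ n : ℕ, (n : ℝ) + 1 ≤ r → a n ≤ a (n + 1) := by
    intro n hn
    have hC : 0 < (1 - p) * ((n : ℝ) + 1) ^ ν := by positivity
    have hle : ((n : ℝ) + 1) ^ ν ≤ r ^ ν :=
      Real.rpow_le_rpow (by positivity) hn hν.le
    have : a n * ((1 - p) * ((n : ℝ) + 1) ^ ν) ≤ a n * ((1 - p) * r ^ ν) := by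
      apply mul_le_mul_of_nonneg_left _ (hapos n).le
      exact mul_le_mul_of_nonneg_left hle hq.le
    rw [← key n] at this
    exact le_of_mul_le_mul_right this hC
  have step_dec : ∀ n : ℕ, r ≤ (n : ℝ) + 1 → a (n + 1) ≤ a n := by
    intro n hn
    have hC : 0 < (1 - p) * ((n : ℝ) + 1) ^ ν := by positivity
    have hle : r ^ ν ≤ ((n : ℝ) + 1) ^ ν :=
      Real.rpow_le_rpow hrpos.le hn hν.le
    have : a n * ((1 - p) * r ^ ν) ≤ a n * ((1 - p) * ((n : ℝ) + 1) ^ ν) := by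
      apply mul_le_mul_of_nonneg_left _ (hapos n).le
      exact mul_le_mul_of_nonneg_left hle hq.le
    rw [← key n] at this
    exact le_of_mul_le_mul_right this hC
  have hmr : (m : ℝ) ≤ r := Nat.floor_le hrpos.le
  have hrm : r < (m : ℝ) + 1 := Nat.lt_floor_add_one r
  rcases le_total y m with hy | hy
  · -- increasing part
    have up : ∀ n, y ≤ n → n ≤ m → a y ≤ a n := by
      intro n hyn
      induction n, hyn using Nat.le_induction with
      | base => intro _; exact le_refl _
      | succ n hn ih =>
        intro hnm
        have h1 : n ≤ m := by omega
        refine le_trans (ih h1) (step_inc n ?_)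
        have : (n : ℝ) + 1 ≤ (m : ℝ) := by exact_mod_cast hnm
        linarith
    exact up m hy le_rfl
  · -- decreasing part
    have down : ∀ n, m ≤ n → a n ≤ a m := by
      intro n hmn
      induction n, hmn using Nat.le_induction with
      | base => exact le_refl _
      | succ n hn ih =>
        refine le_trans (step_dec n ?_) ih
        have : (m : ℝ) ≤ (n : ℝ) := by exact_mod_cast hn
        linarith
    exact down y hy
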